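/- arXiv:1301.3658 — 5 statements merged into one kernel-verified Lean document; each statement's English description precedes it below -/
import Mathlib

section
/- Let B_{n,k} denote the partial Bell polynomials. For n ≥ k+1 and k ≥ 1, one has B_{n,k} = (1/x_1)·(1/(n-k)) ∑_{α=1}^{n-k} C(n,α)·[(k+1) − (n+1)/(α+1)]·x_{α+1}·B_{n−α,k}, where C(n,α) is the binomial coefficient. (Equivalently, clearing denominators: (n−k)·x_1·B_{n,k} = ∑_{α=1}^{n-k} [n!/(α! (n−α)!)]·[(k+1) − (n+1)/(α+1)]·x_{α+1}·B_{n−α,k}.) -/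
open PowerSeries Finset

/-- The series `∑_{m ≥ 1} x_m t^m / m!`. -/
noncomputable def bellSeries {R : Type*} [CommRing R] [Algebra ℚ R] (x : ℕ → R) :
    PowerSeries R :=
  PowerSeries.mk fun m => if m = 0 then 0 else ((m.factorial : ℚ)⁻¹) • x m

/-- The partial Bell polynomial `B_{n,k}`, defined by
`(1/k!) (∑_{m≥1} x_m t^m/m!)^k = ∑_{n≥k} B_{n,k} t^n/n!`. -/
noncomputable def partialBell {R : Type*} [CommRing R] [Algebra ℚ R] (x : ℕ → R)
    (n k : ℕ) : R :=
  ((n.factorial : ℚ) / (k.factorial : ℚ)) • PowerSeries.coeff n (bellSeries x ^ k)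

section Aux

variable {R : Type*} [CommRing R] [Algebra ℚ R] (x : ℕ → R)

lemma coeff_bellSeries (m : ℕ) :
    PowerSeries.coeff m (bellSeries x)
      = if m = 0 then 0 else ((m.factorial : ℚ)⁻¹) • x m :=
  coeff_mk _ _

lemma coeff_bellSeries_pow_eq_zero {k j : ℕ} (h : j < k) :
    PowerSeries.coeff j (bellSeries x ^ k) = 0 := by
  induction k generalizing j with
  | zero => omega
  | succ k ih =>
    rw [pow_succ, coeff_mul]
    refine Finset.sum_eq_zero fun p hp => ?_
    rw [Finset.HasAntidiagonal.mem_antidiagonal] at hp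
    rcases lt_or_ge p.1 k with h1 | h1
    · rw [ih h1, zero_mul]
    · have : p.2 = 0 := by omega
      rw [this, coeff_bellSeries, if_pos rfl, mul_zero]

lemma coeff_bellSeries_mul_pow (k N : ℕ) (hkN : k ≤ N) :
    PowerSeries.coeff N (bellSeries x * bellSeries x ^ k) =
      ∑ α ∈ Finset.Icc 1 (N - k),
        ((α.factorial : ℚ)⁻¹) • (x α * PowerSeries.coeff (N - α) (bellSeries x ^ k)) := by
  rw [coeff_mul, Finset.Nat.sum_antidiagonal_eq_sum_range_succ_mk]
  rw [← Finset.sum_subset (show Finset.Icc 1 (N - k) ⊆ Finset.range (N + 1) from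
    fun α hα => by simp only [Finset.mem_Icc] at hα; simp; omega)]
  · refine Finset.sum_congr rfl fun α hα => ?_
    rw [Finset.mem_Icc] at hα
    rw [coeff_bellSeries, if_neg (by omega), smul_mul_assoc]
  · intro α hα hα'
    rw [Finset.mem_range] at hα
    rw [Finset.mem_Icc] at hα'
    rcases Nat.eq_zero_or_pos α with h0 | h0
    · rw [h0, coeff_bellSeries, if_pos rfl, zero_mul]
    · have : N - α < k := by omega
      rw [coeff_bellSeries_pow_eq_zero x this, mul_zero]

lemma coeff_derivative_bellSeries (m : ℕ) :
    PowerSeries.coeff m (PowerSeries.derivative R (bellSeries x)) =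
      ((m.factorial : ℚ)⁻¹) • x (m + 1) := by
  rw [PowerSeries.coeff_derivative, coeff_bellSeries, if_neg (Nat.succ_ne_zero m)]
  have : ((m : R) + 1) = ((((m : ℚ) + 1) : ℚ) • (1 : R)) := by
    simp [Algebra.smul_def]
  rw [this, smul_mul_assoc, mul_smul_comm, mul_one, smul_smul]
  congr 1
  rw [Nat.factorial_succ]
  push_cast
  rw [mul_comm (m + 1 : ℚ)]
  field_simp

lemma coeff_der_mul_pow (k N : ℕ) (hkN : k ≤ N) :
    PowerSeries.coeff N (PowerSeries.derivative R (bellSeries x) * bellSeries x ^ k) =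
      ∑ α ∈ Finset.Icc 0 (N - k),
        ((α.factorial : ℚ)⁻¹) • (x (α + 1) * PowerSeries.coeff (N - α) (bellSeries x ^ k)) := by
  rw [coeff_mul, Finset.Nat.sum_antidiagonal_eq_sum_range_succ_mk]
  rw [← Finset.sum_subset (show Finset.Icc 0 (N - k) ⊆ Finset.range (N + 1) from
    fun α hα => by simp only [Finset.mem_Icc] at hα; simp; omega)]
  · refine Finset.sum_congr rfl fun α hα => ?_
    rw [coeff_derivative_bellSeries, smul_mul_assoc]
  · intro α hα hα'
    rw [Finset.mem_range] at hα
    rw [Finset.mem_Icc] at hα'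
    have : N - α < k := by omega
    rw [coeff_bellSeries_pow_eq_zero x this, mul_zero]

end Aux


lemma sum_Icc_one {M : Type*} [AddCommMonoid M] (m : ℕ) (g : ℕ → M) :
    ∑ α ∈ Finset.Icc 1 m, g α = ∑ i ∈ Finset.range m, g (1 + i) := by
  rw [← Finset.Ico_add_one_right_eq_Icc, Finset.sum_Ico_eq_sum_range]; simp

lemma cast_mul_helper {R : Type*} [CommRing R] [Algebra ℚ R] (m : ℕ) (c : R) :
    c * ((m : R) + 1) = ((m : ℚ) + 1) • c := by
  rw [Algebra.smul_def]
  rw [show (algebraMap ℚ R) ((m : ℚ) + 1) = ((m : R) + 1) by push_cast; ring]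
  ring

lemma key_identity {R : Type*} [CommRing R] [Algebra ℚ R] (x : ℕ → R) (n k : ℕ)
    (hk : 1 ≤ k) (hn : k + 1 ≤ n) :
    ((n - k : ℕ) : ℚ) • (x 1 * PowerSeries.coeff n (bellSeries x ^ k)) =
      ∑ α ∈ Finset.Icc 1 (n - k),
        ((α.factorial : ℚ)⁻¹ * (((k : ℚ) + 1) - ((n : ℚ) + 1) / ((α : ℚ) + 1))) •
          (x (α + 1) * PowerSeries.coeff (n - α) (bellSeries x ^ k)) := by
  set f := bellSeries x with hf
  set m := n - k with hm
  set u : R := x 1 * PowerSeries.coeff n (f ^ k) with hu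
  set t : ℕ → R := fun i => x (i + 2) * PowerSeries.coeff (n - (i + 1)) (f ^ k) with htt
  have E0 : PowerSeries.coeff n (PowerSeries.derivative R (f ^ (k + 1)))
      = PowerSeries.coeff n ((k + 1 : ℕ) • (f ^ k * PowerSeries.derivative R f)) := by
    rw [Derivation.leibniz_pow]
    simp [smul_eq_mul, mul_comm]
  have E : ((n : ℚ) + 1) • PowerSeries.coeff (n + 1) (f ^ (k + 1))
      = ((k : ℚ) + 1) • PowerSeries.coeff n (PowerSeries.derivative R f * f ^ k) := by
    rw [PowerSeries.coeff_derivative, map_nsmul] at E0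
    rw [← cast_mul_helper, E0, mul_comm (f ^ k), ← Nat.cast_smul_eq_nsmul ℚ]
    norm_cast
  have hA : PowerSeries.coeff n (PowerSeries.derivative R f * f ^ k)
      = u + ∑ i ∈ Finset.range m, (((i + 1).factorial : ℚ))⁻¹ • t i := by
    rw [coeff_der_mul_pow x k n (by omega), ← hm]
    rw [show Finset.Icc 0 m = Finset.range (m + 1) by
      rw [← Finset.Ico_add_one_right_eq_Icc, Finset.range_eq_Ico]]
    rw [Finset.sum_range_succ']
    rw [add_comm]
    norm_num [hu, htt, hf]
  have hB : PowerSeries.coeff (n + 1) (f ^ (k + 1))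
      = u + ∑ i ∈ Finset.range m, (((i + 2).factorial : ℚ))⁻¹ • t i := by
    rw [pow_succ, mul_comm, coeff_bellSeries_mul_pow x k (n + 1) (by omega)]
    rw [show n + 1 - k = m + 1 by omega]
    rw [sum_Icc_one, Finset.sum_range_succ', add_comm]
    congr 1
    · norm_num [hu, hf]
    · refine Finset.sum_congr rfl fun i _ => ?_
      have e2 : n + 1 - (1 + (i + 1)) = n - (i + 1) := by omega
      have e1 : 1 + (i + 1) = i + 2 := by omega
      rw [e2, e1]
  rw [hA, hB, smul_add, smul_add] at E
  rw [sum_Icc_one]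
  have goalR : ∀ i ∈ Finset.range m,
      (((1 + i).factorial : ℚ)⁻¹ * (((k : ℚ) + 1) - ((n : ℚ) + 1) / (((1 + i : ℕ) : ℚ) + 1))) •
          (x (1 + i + 1) * PowerSeries.coeff (n - (1 + i)) (f ^ k))
        = (((k : ℚ) + 1) * (((i + 1).factorial : ℚ))⁻¹
            - ((n : ℚ) + 1) * (((i + 2).factorial : ℚ))⁻¹) • t i := by
    intro i _
    have e1 : 1 + i = i + 1 := by omega
    rw [e1]
    rw [show i + 1 + 1 = i + 2 from by omega]
    congr 1
    have h1 : ((i + 1).factorial : ℚ) ≠ 0 := Nat.cast_ne_zero.mpr (Nat.factorial_ne_zero _)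
    have h2 : ((i : ℚ) + 1 + 1) ≠ 0 := by positivity
    rw [show (i + 2).factorial = (i + 2) * (i + 1).factorial from Nat.factorial_succ (i + 1)]
    push_cast
    field_simp
    ring
  rw [Finset.sum_congr rfl goalR]
  have hmq : ((m : ℕ) : ℚ) = ((n : ℚ) + 1) - ((k : ℚ) + 1) := by
    rw [hm, Nat.cast_sub (by omega : k ≤ n)]; ring
  rw [hmq, sub_smul]
  have E' : ((n : ℚ) + 1) • u - ((k : ℚ) + 1) • u
      = ((k : ℚ) + 1) • ∑ i ∈ Finset.range m, (((i + 1).factorial : ℚ))⁻¹ • t i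
        - ((n : ℚ) + 1) • ∑ i ∈ Finset.range m, (((i + 2).factorial : ℚ))⁻¹ • t i := by
    rw [sub_eq_sub_iff_add_eq_add]
    calc ((n : ℚ) + 1) • u + ((n : ℚ) + 1) • ∑ i ∈ Finset.range m, (((i + 2).factorial : ℚ))⁻¹ • t i
        = ((k : ℚ) + 1) • u + ((k : ℚ) + 1) • ∑ i ∈ Finset.range m, (((i + 1).factorial : ℚ))⁻¹ • t i := E
      _ = _ := add_comm _ _
  rw [E', Finset.smul_sum, Finset.smul_sum, ← Finset.sum_sub_distrib]
  refine Finset.sum_congr rfl fun i _ => ?_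
  rw [smul_smul, smul_smul, ← sub_smul]

theorem partialBell_recurrence (n k : ℕ) (hk : 1 ≤ k) (hn : k + 1 ≤ n) :
    ((n - k : ℕ) : ℚ) •
        (MvPolynomial.X 1 * partialBell (fun i => MvPolynomial.X i) n k :
          MvPolynomial ℕ ℚ) =
      ∑ α ∈ Finset.Icc 1 (n - k),
        ((n.choose α : ℚ) * (((k : ℚ) + 1) - ((n : ℚ) + 1) / ((α : ℚ) + 1))) •
          (MvPolynomial.X (α + 1) *
            partialBell (fun i => MvPolynomial.X i) (n - α) k) := by
  simp only [partialBell]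
  rw [mul_smul_comm, smul_comm]
  rw [key_identity (fun i => MvPolynomial.X i) n k hk hn, Finset.smul_sum]
  refine Finset.sum_congr rfl fun α hα => ?_
  rw [Finset.mem_Icc] at hα
  rw [mul_smul_comm, smul_smul, smul_smul]
  congr 1
  have h := Nat.choose_mul_factorial_mul_factorial (show α ≤ n by omega)
  have hcast : (n.choose α : ℚ) * α.factorial * (n - α).factorial = n.factorial := by
    exact_mod_cast congrArg (Nat.cast : ℕ → ℚ) h
  have hα0 : (α.factorial : ℚ) ≠ 0 := Nat.cast_ne_zero.mpr (Nat.factorial_ne_zero _)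
  have hk0 : (k.factorial : ℚ) ≠ 0 := Nat.cast_ne_zero.mpr (Nat.factorial_ne_zero _)
  have ha1 : ((α : ℚ) + 1) ≠ 0 := by positivity
  have key2 : (n.factorial : ℚ) / k.factorial * (α.factorial : ℚ)⁻¹
      = (n.choose α : ℚ) * ((n - α).factorial / k.factorial) := by
    field_simp
    linear_combination (-1 : ℚ) * hcast
  linear_combination (((k : ℚ) + 1) - ((n : ℚ) + 1) / ((α : ℚ) + 1)) * key2
end

section
/- For n ≥ k+1 and k ≥ 1, the partial Bell polynomial B_{n,k+1} equals (1/(k+1)!) times the multiple sum ∑_{α_1=k}^{n−1} ∑_{α_2=k−1}^{α_1−1} ⋯ ∑_{α_k=1}^{α_{k−1}−1} C(n,α_1) C(α_1,α_2) ⋯ C(α_{k−1},α_k) · x_{n−α_1} x_{α_1−α_2} ⋯ x_{α_{k−1}−α_k} x_{α_k}. -/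
open PowerSeries Finset

private lemma tele_range (b : ℕ → ℕ) (hb : ∀ i, b (i+1) ≤ b i) :
    ∀ j, ∑ i ∈ range j, (b i - b (i+1)) = b 0 - b j := by
  intro j
  induction j with
  | zero => simp
  | succ j ih =>
    rw [Finset.sum_range_succ, ih]
    have h1 : b j ≤ b 0 := antitone_nat_of_succ_le hb (Nat.zero_le j)
    have h2 := hb j
    omega

private lemma tele_Ico (b : ℕ → ℕ) (hb : ∀ i, b (i+1) ≤ b i) (a c : ℕ) (h : a ≤ c) :
    ∑ i ∈ Ico a c, (b i - b (i+1)) = b a - b c := by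
  rw [Finset.sum_Ico_eq_sum_range]
  have := tele_range (fun t => b (a + t))
    (fun i => by show b (a+(i+1)) ≤ b (a+i); rw [← Nat.add_assoc]; exact hb (a + i)) (c - a)
  simp only [Nat.add_zero, ← Nat.add_assoc, Nat.add_sub_cancel' h] at this
  exact this

private lemma fact_chain (b : ℕ → ℕ) :
    ∀ k : ℕ, (∀ i < k, b (i+1) ≤ b i) →
      (b 0).factorial = (∏ i ∈ range k, (b i).choose (b (i+1))) *
        ((∏ i ∈ range k, (b i - b (i+1)).factorial) * (b k).factorial) := by
  intro k
  induction k with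
  | zero => simp
  | succ k ih =>
    intro h
    rw [Finset.prod_range_succ, Finset.prod_range_succ, ih (fun i hi => h i (by omega))]
    have hc := Nat.choose_mul_factorial_mul_factorial (h k (by omega))
    rw [← hc]
    ring

/-- The per-term identity. -/
private lemma term_eq {R : Type*} [CommRing R] [Algebra ℚ R] (x : ℕ → R) (n m : ℕ)
    (l : ℕ → ℕ) (a A : ℕ → ℕ)
    (ha : ∀ i, i ≤ m → a i = A (i+1))
    (hA0 : A 0 = n) (hAtop : A (m+2) = 0)
    (hmono : ∀ t, A (t+1) ≤ A t)
    (hsub : ∀ t, t < m+2 → A t - A (t+1) = l t) :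
    ((n.factorial : ℚ) / ((m+2).factorial : ℚ)) •
      ((∏ i ∈ range (m+2), ((l i).factorial : ℚ)⁻¹) • ∏ i ∈ range (m+2), x (l i)) =
    (((m+2).factorial : ℚ)⁻¹) •
      (((n.choose (a 0) : ℚ) * ∏ i ∈ range m, ((a i).choose (a (i+1)) : ℚ)) •
        (x (n - a 0) * (∏ i ∈ range m, x (a i - a (i+1))) * x (a m))) := by
  have hplus : ∀ t, t < m+2 → A t = l t + A (t+1) := by
    intro t ht
    have h1 := hsub t ht
    have h2 := hmono t
    omega
  have hAtop' : A (m+1+1) = 0 := hAtop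
  have hx0 : l 0 = n - A 1 := by
    have h := hplus 0 (by omega)
    rw [show A (0+1) = A 1 from rfl] at h
    omega
  have hA1n : A 1 ≤ n := by
    have h := hmono 0
    rw [show A (0+1) = A 1 from rfl] at h
    omega
  have hxm : l (m+1) = A (m+1) := by have := hplus (m+1) (by omega); omega
  have hmid : ∀ i, i < m+1 → l (i+1) = A (i+1) - A (i+1+1) := by
    intro i hi
    have := hplus (i+1) (by omega)
    omega
  -- the arithmetic identity over ℕ
  have hNat : n.factorial = ((n.choose (A 1)) * ∏ i ∈ range m, (A (i+1)).choose (A (i+1+1))) *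
      ∏ i ∈ range (m+2), (l i).factorial := by
    have hch := fact_chain A (m+2) (fun i _ => hmono i)
    rw [hA0, hAtop, Nat.factorial_zero, mul_one] at hch
    have e1 : ∏ i ∈ range (m+2), (A i).choose (A (i+1)) =
        (∏ i ∈ range (m+1), (A (i+1)).choose (A (i+1+1))) * (A 0).choose (A 1) :=
      Finset.prod_range_succ' (fun i => (A i).choose (A (i+1))) (m+1)
    have e2 : ∏ i ∈ range (m+1), (A (i+1)).choose (A (i+1+1)) =
        (∏ i ∈ range m, (A (i+1)).choose (A (i+1+1))) * (A (m+1)).choose (A (m+1+1)) :=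
      Finset.prod_range_succ (fun i => (A (i+1)).choose (A (i+1+1))) m
    have e3 : ∏ i ∈ range (m+2), (A i - A (i+1)).factorial =
        ∏ i ∈ range (m+2), (l i).factorial :=
      Finset.prod_congr rfl (fun i hi => by rw [hsub i (Finset.mem_range.mp hi)])
    rw [e1, e2, e3, hAtop', Nat.choose_zero_right, mul_one, hA0] at hch
    rw [hch]; ring
  have hcast : (n.factorial : ℚ) = ((n.choose (A 1) : ℚ) *
      ∏ i ∈ range m, ((A (i+1)).choose (A (i+1+1)) : ℚ)) *
      ∏ i ∈ range (m+2), ((l i).factorial : ℚ) := by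
    exact_mod_cast congrArg (Nat.cast : ℕ → ℚ) hNat
  have hP : (∏ i ∈ range (m+2), ((l i).factorial : ℚ)) ≠ 0 :=
    Finset.prod_ne_zero_iff.mpr fun i _ => Nat.cast_ne_zero.mpr (Nat.factorial_ne_zero _)
  have hF : (((m+2).factorial : ℕ) : ℚ) ≠ 0 := Nat.cast_ne_zero.mpr (Nat.factorial_ne_zero _)
  -- scalar identity
  have hs : ((n.factorial : ℚ) / ((m+2).factorial : ℚ)) * (∏ i ∈ range (m+2), ((l i).factorial : ℚ)⁻¹)
      = (((m+2).factorial : ℚ))⁻¹ * ((n.choose (A 1) : ℚ) *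
          ∏ i ∈ range m, ((A (i+1)).choose (A (i+1+1)) : ℚ)) := by
    rw [Finset.prod_inv_distrib, hcast]
    field_simp
  -- ring identity
  have hr : (∏ i ∈ range (m+2), x (l i)) =
      x (n - A 1) * (∏ i ∈ range m, x (A (i+1) - A (i+1+1))) * x (A (m+1)) := by
    have e1 : ∏ i ∈ range (m+2), x (l i) = (∏ i ∈ range (m+1), x (l (i+1))) * x (l 0) :=
      Finset.prod_range_succ' (fun i => x (l i)) (m+1)
    have e2 : ∏ i ∈ range (m+1), x (l (i+1)) =
        (∏ i ∈ range m, x (l (i+1))) * x (l (m+1)) :=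
      Finset.prod_range_succ (fun i => x (l (i+1))) m
    have e3 : ∏ i ∈ range m, x (l (i+1)) = ∏ i ∈ range m, x (A (i+1) - A (i+1+1)) :=
      Finset.prod_congr rfl (fun i hi => by rw [hmid i (by
        have := Finset.mem_range.mp hi; omega)])
    rw [e1, e2, e3, hx0, hxm]
    ring
  have pc : ∏ i ∈ range m, ((a i).choose (a (i+1)) : ℚ) =
      ∏ i ∈ range m, ((A (i+1)).choose (A (i+1+1)) : ℚ) :=
    Finset.prod_congr rfl (fun i hi => by
      have him := Finset.mem_range.mp hi
      rw [ha i (by omega), ha (i+1) (by omega)])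
  have px : ∏ i ∈ range m, x (a i - a (i+1)) =
      ∏ i ∈ range m, x (A (i+1) - A (i+1+1)) :=
    Finset.prod_congr rfl (fun i hi => by
      have him := Finset.mem_range.mp hi
      rw [ha i (by omega), ha (i+1) (by omega)])
  rw [smul_smul, smul_smul, ha 0 (by omega), ha m (by omega), pc, px, hs, hr]

private lemma prod_smul_aux {R : Type*} [CommRing R] [Algebra ℚ R]
    (s : Finset ℕ) (c : ℕ → ℚ) (f : ℕ → R) :
    ∏ i ∈ s, (c i • f i) = (∏ i ∈ s, c i) • ∏ i ∈ s, f i := by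
  induction s using Finset.cons_induction with
  | empty => simp
  | cons a s ha ih =>
    rw [Finset.prod_cons, Finset.prod_cons, Finset.prod_cons, ih, smul_mul_smul_comm]

private def chainOf (n : ℕ) {k : ℕ} (α : Fin k → ℕ) : ℕ → ℕ :=
  fun t => if t = 0 then n else if h : t - 1 < k then α ⟨t - 1, h⟩ else 0

private lemma chainOf_zero (n : ℕ) {k : ℕ} (α : Fin k → ℕ) (t : ℕ) (ht : k + 1 ≤ t) :
    chainOf n α t = 0 := by
  unfold chainOf
  rw [if_neg (by omega), dif_neg (by omega)]

private noncomputable def bwd (n m : ℕ) (α : Fin (m+1) → ℕ) : ℕ →₀ ℕ :=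
  Finsupp.onFinset (range (m+2)) (fun t => chainOf n α t - chainOf n α (t+1))
    (fun a ha => by
      rw [Finset.mem_range]
      by_contra hc
      refine ha ?_
      show chainOf n α a - chainOf n α (a+1) = 0
      rw [chainOf_zero n α a (by omega), chainOf_zero n α (a+1) (by omega)])

private lemma chainOf_strict (n m : ℕ) (α : Fin (m+1) → ℕ)
    (hp : ∀ j, α j < n)
    (hq1 : ∀ i : Fin (m+1), m + 1 - (i : ℕ) ≤ α i)
    (hq2 : ∀ i : Fin (m+1), ∀ h : (i : ℕ) + 1 < m + 1, α ⟨(i : ℕ) + 1, h⟩ < α i) :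
    ∀ t, t < m + 2 → chainOf n α (t+1) < chainOf n α t := by
  have hval : ∀ (u : ℕ) (hu : u < m + 1), chainOf n α (u+1) = α ⟨u, hu⟩ := by
    intro u hu
    unfold chainOf
    rw [if_neg (by omega), dif_pos (show u+1-1 < m+1 by omega)]
    rfl
  intro t ht
  rcases Nat.eq_zero_or_pos t with rfl | h0
  · rw [show chainOf n α 0 = n from rfl, hval 0 (by omega)]
    exact hp _
  · obtain ⟨u, rfl⟩ : ∃ u, t = u + 1 := ⟨t - 1, by omega⟩
    have hu1 : u < m + 1 := by omega
    rcases Nat.lt_or_ge u m with hu | hu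
    · have hu2 : u + 1 < m + 1 := by omega
      rw [hval u hu1, hval (u+1) hu2]
      exact hq2 ⟨u, hu1⟩ (show u + 1 < m + 1 from hu2)
    · rw [hval u hu1, chainOf_zero n α (u+1+1) (by omega)]
      have h3 : m + 1 - u ≤ α ⟨u, hu1⟩ := hq1 ⟨u, hu1⟩
      omega

private lemma chainOf_mono (n m : ℕ) (α : Fin (m+1) → ℕ)
    (hp : ∀ j, α j < n)
    (hq1 : ∀ i : Fin (m+1), m + 1 - (i : ℕ) ≤ α i)
    (hq2 : ∀ i : Fin (m+1), ∀ h : (i : ℕ) + 1 < m + 1, α ⟨(i : ℕ) + 1, h⟩ < α i) :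
    ∀ t, chainOf n α (t+1) ≤ chainOf n α t := by
  intro t
  rcases Nat.lt_or_ge t (m+2) with h | h
  · exact le_of_lt (chainOf_strict n m α hp hq1 hq2 t h)
  · rw [chainOf_zero n α t (by omega), chainOf_zero n α (t+1) (by omega)]

theorem partialBell_closed_form {R : Type*} [CommRing R] [Algebra ℚ R] (x : ℕ → R)
    (n k : ℕ) (hk : 1 ≤ k) (hn : k + 1 ≤ n) :
    partialBell x n (k + 1) =
      (((k + 1).factorial : ℚ)⁻¹) •
        ∑ α ∈ (Fintype.piFinset fun _ : Fin k => Finset.range n).filter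
            (fun α => (∀ i : Fin k, k - (i : ℕ) ≤ α i) ∧
              ∀ i : Fin k, ∀ h : (i : ℕ) + 1 < k, α ⟨(i : ℕ) + 1, h⟩ < α i),
          (fun a : ℕ → ℕ =>
              ((n.choose (a 0) : ℚ) *
                  ∏ i ∈ Finset.range (k - 1), ((a i).choose (a (i + 1)) : ℚ)) •
                (x (n - a 0) * (∏ i ∈ Finset.range (k - 1), x (a i - a (i + 1))) *
                  x (a (k - 1))))
            (fun i => if h : i < k then α ⟨i, h⟩ else 0) := by
  classical
  obtain ⟨m, rfl⟩ : ∃ m, k = m + 1 := ⟨k - 1, by omega⟩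
  simp only [show m + 1 + 1 = m + 2 from rfl, Nat.add_sub_cancel]
  have key : (PowerSeries.coeff n) (bellSeries x ^ (m + 2)) =
      ∑ l ∈ (finsuppAntidiag (range (m+2)) n).filter
          (fun l : ℕ →₀ ℕ => ∀ i ∈ range (m+2), l i ≠ 0),
        (∏ i ∈ range (m+2), ((l i).factorial : ℚ)⁻¹) • ∏ i ∈ range (m+2), x (l i) := by
    rw [PowerSeries.coeff_pow]
    rw [← Finset.sum_filter_of_ne (p := fun l : ℕ →₀ ℕ => ∀ i ∈ range (m+2), l i ≠ 0)
      (fun l _ hne i hi h0 => hne (Finset.prod_eq_zero hi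
        (by rw [bellSeries, PowerSeries.coeff_mk, if_pos h0])))]
    refine Finset.sum_congr rfl fun l hl => ?_
    simp only [Finset.mem_filter] at hl
    rw [← prod_smul_aux]
    exact Finset.prod_congr rfl fun i hi => by
      rw [bellSeries, PowerSeries.coeff_mk, if_neg (hl.2 i hi)]
  rw [partialBell, key, Finset.smul_sum, Finset.smul_sum]
  refine Finset.sum_nbij'
    (i := fun l (j : Fin (m+1)) => ∑ t ∈ Ico ((j : ℕ)+1) (m+2), l t)
    (j := fun α => bwd n m α) ?_ ?_ ?_ ?_ ?_
  · -- forward membership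
    intro l hl
    simp only [Finset.mem_filter, Finset.mem_finsuppAntidiag] at hl
    obtain ⟨⟨hsum, hsupp⟩, hpos⟩ := hl
    rw [Finset.mem_filter]
    refine ⟨Fintype.mem_piFinset.mpr fun j => ?_, fun j => ?_, fun j hj => ?_⟩
    · rw [Finset.mem_range]
      show ∑ t ∈ Ico ((j : ℕ)+1) (m+2), l t < n
      have hsum' : ∑ t ∈ range (m+2), l t = n := hsum
      have hsplit : ∑ t ∈ range ((j : ℕ)+1), l t + ∑ t ∈ Ico ((j : ℕ)+1) (m+2), l t
          = ∑ t ∈ range (m+2), l t := Finset.sum_range_add_sum_Ico _ (by omega)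
      have h0 : l 0 ≤ ∑ t ∈ range ((j : ℕ)+1), l t :=
        Finset.single_le_sum (fun t _ => Nat.zero_le _) (Finset.mem_range.mpr (by omega))
      have h1 : l 0 ≠ 0 := hpos 0 (Finset.mem_range.mpr (by omega))
      omega
    · have hcard : (Ico ((j : ℕ)+1) (m+2)).card = m + 1 - (j : ℕ) := by
        rw [Nat.card_Ico]; omega
      calc m + 1 - (j : ℕ) = (Ico ((j : ℕ)+1) (m+2)).card • 1 := by
            rw [hcard, smul_eq_mul, mul_one]
        _ ≤ ∑ t ∈ Ico ((j : ℕ)+1) (m+2), l t :=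
            Finset.card_nsmul_le_sum _ _ _ (fun t ht => by
              have := hpos t (Finset.mem_range.mpr (Finset.mem_Ico.mp ht).2)
              omega)
    · show ∑ t ∈ Ico ((j : ℕ)+1+1) (m+2), l t < ∑ t ∈ Ico ((j : ℕ)+1) (m+2), l t
      rw [Finset.sum_eq_sum_Ico_succ_bot (show (j : ℕ)+1 < m+2 by omega)]
      have := hpos ((j : ℕ)+1) (Finset.mem_range.mpr (by omega))
      omega
  · -- backward membership
    intro α hα
    rw [Finset.mem_filter, Fintype.mem_piFinset] at hα
    obtain ⟨hp, hq1, hq2⟩ := hα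
    have hp' : ∀ j, α j < n := fun j => Finset.mem_range.mp (hp j)
    have hmono := chainOf_mono n m α hp' hq1 hq2
    have hstrict := chainOf_strict n m α hp' hq1 hq2
    simp only [Finset.mem_filter, Finset.mem_finsuppAntidiag]
    refine ⟨⟨?_, Finsupp.support_onFinset_subset⟩, fun i hi => ?_⟩
    · show ∑ t ∈ range (m+2), (chainOf n α t - chainOf n α (t+1)) = n
      rw [tele_range _ hmono, chainOf_zero n α (m+2) (by omega)]
      have : chainOf n α 0 = n := rfl
      omega
    · show chainOf n α i - chainOf n α (i+1) ≠ 0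
      have := hstrict i (Finset.mem_range.mp hi)
      omega
  · -- left inverse
    intro l hl
    simp only [Finset.mem_filter, Finset.mem_finsuppAntidiag] at hl
    obtain ⟨⟨hsum, hsupp⟩, hpos⟩ := hl
    have hch : ∀ t, chainOf n (fun j : Fin (m+1) => ∑ u ∈ Ico ((j : ℕ)+1) (m+2), l u) t
        = ∑ u ∈ Ico t (m+2), l u := by
      intro t
      rcases Nat.eq_zero_or_pos t with rfl | h0
      · rw [show chainOf n _ 0 = n from rfl, ← Finset.range_eq_Ico]
        exact hsum.symm
      · rcases Nat.lt_or_ge t (m+2) with ht | ht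
        · obtain ⟨u, rfl⟩ : ∃ u, t = u + 1 := ⟨t - 1, by omega⟩
          unfold chainOf
          rw [if_neg (by omega), dif_pos (show u+1-1 < m+1 by omega)]
          rfl
        · rw [chainOf_zero _ _ _ (by omega), Finset.Ico_eq_empty (by omega),
            Finset.sum_empty]
    ext a
    show chainOf n _ a - chainOf n _ (a+1) = l a
    rw [hch, hch]
    rcases Nat.lt_or_ge a (m+2) with ha | ha
    · rw [Finset.sum_eq_sum_Ico_succ_bot ha]
      omega
    · rw [Finset.Ico_eq_empty (by omega), Finset.Ico_eq_empty (by omega)]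
      have : l a = 0 := Finsupp.notMem_support_iff.mp
        (fun hmem => by have := Finset.mem_range.mp (hsupp hmem); omega)
      simp [this]
  · -- right inverse
    intro α hα
    rw [Finset.mem_filter, Fintype.mem_piFinset] at hα
    obtain ⟨hp, hq1, hq2⟩ := hα
    have hp' : ∀ j, α j < n := fun j => Finset.mem_range.mp (hp j)
    have hmono := chainOf_mono n m α hp' hq1 hq2
    funext j
    show ∑ t ∈ Ico ((j : ℕ)+1) (m+2), (chainOf n α t - chainOf n α (t+1)) = α j
    rw [tele_Ico _ hmono _ _ (by omega), chainOf_zero n α (m+2) (by omega)]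
    have h1 : chainOf n α ((j : ℕ)+1) = α j := by
      unfold chainOf
      rw [if_neg (by omega), dif_pos (show (j : ℕ)+1-1 < m+1 by omega)]
      rfl
    rw [h1]
    exact Nat.sub_zero _
  · -- term equality
    intro l hl
    simp only [Finset.mem_filter, Finset.mem_finsuppAntidiag] at hl
    obtain ⟨⟨hsum, hsupp⟩, hpos⟩ := hl
    have hsub : ∀ t, t < m+2 →
        (∑ u ∈ Ico t (m+2), l u) - (∑ u ∈ Ico (t+1) (m+2), l u) = l t := by
      intro t ht
      rw [Finset.sum_eq_sum_Ico_succ_bot ht]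
      omega
    have hmono : ∀ t, (∑ u ∈ Ico (t+1) (m+2), l u) ≤ ∑ u ∈ Ico t (m+2), l u := by
      intro t
      rcases Nat.lt_or_ge t (m+2) with ht | ht
      · rw [Finset.sum_eq_sum_Ico_succ_bot ht]
        exact Nat.le_add_left _ _
      · rw [Finset.Ico_eq_empty (by omega), Finset.Ico_eq_empty (by omega)]
    refine term_eq x n m (fun t => l t)
      (fun i => if h : i < m+1 then ∑ t ∈ Ico (i+1) (m+2), l t else 0)
      (fun t => ∑ u ∈ Ico t (m+2), l u) ?_ ?_ ?_ hmono hsub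
    · intro i hi
      show (if h : i < m+1 then ∑ t ∈ Ico (i+1) (m+2), l t else 0) = ∑ u ∈ Ico (i+1) (m+2), l u
      rw [dif_pos (by omega)]
    · show ∑ u ∈ Ico 0 (m+2), l u = n
      rw [← Finset.range_eq_Ico]
      exact hsum
    · show ∑ u ∈ Ico (m+2) (m+2), l u = 0
      rw [Finset.Ico_self, Finset.sum_empty]
end

section
/- Let f(x) = ∑_{n≥0} f_n x^n be a formal power series over a commutative ℚ-algebra and let k be a non-negative integer, with g(x) = f(x)^k = ∑_{n≥0} g_n(k) x^n. Then for every n ≥ 0, ∑_{α=0}^{n} [α(k+1) − n] f_α g_{n−α}(k) = 0. -/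
open PowerSeries Finset

theorem powerSeries_pow_coeff_recurrence {R : Type*} [CommRing R] [Algebra ℚ R]
    (f : PowerSeries R) (k : ℕ) (n : ℕ) :
    ∑ α ∈ Finset.range (n + 1),
        ((α : ℤ) * ((k : ℤ) + 1) - (n : ℤ)) •
          (PowerSeries.coeff α f * PowerSeries.coeff (n - α) (f ^ k)) = 0 := by
  rcases n with _ | m
  · simp
  set g := f ^ k with hg
  have hA : ∑ α ∈ Finset.range (m + 2), coeff α f * coeff (m + 1 - α) g
      = coeff (m + 1) (f ^ (k + 1)) := by
    rw [pow_succ', coeff_mul, Finset.Nat.sum_antidiagonal_eq_sum_range_succ_mk]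
  have hB : ∑ α ∈ Finset.range (m + 2), (α : R) * (coeff α f * coeff (m + 1 - α) g)
      = coeff m (d⁄dX R f * g) := by
    rw [coeff_mul, Finset.Nat.sum_antidiagonal_eq_sum_range_succ_mk,
      Finset.sum_range_succ' _ (m + 1)]
    simp only [Nat.cast_zero, zero_mul, add_zero, coeff_derivative]
    refine Finset.sum_congr rfl fun i _ => ?_
    have : m + 1 - (i + 1) = m - i := by omega
    rw [this]
    push_cast
    ring
  have hkey : coeff (m + 1) (f ^ (k + 1)) * ((m : R) + 1)
      = ((k : R) + 1) * coeff m (d⁄dX R f * g) := by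
    have h := Derivation.leibniz_pow (d⁄dX R) (a := f) (k + 1)
    have h2 := congrArg (coeff m) h
    rw [coeff_derivative] at h2
    push_cast at h2 ⊢
    rw [h2, smul_eq_mul, mul_comm (f ^ k), ← hg, map_nsmul, nsmul_eq_mul]
    push_cast
    ring
  have hc : ∀ α ∈ Finset.range (m + 2),
      ((α : ℤ) * ((k : ℤ) + 1) - ((m + 1 : ℕ) : ℤ)) •
          (coeff α f * coeff (m + 1 - α) g)
        = ((k : R) + 1) * ((α : R) * (coeff α f * coeff (m + 1 - α) g))
          - ((m : R) + 1) * (coeff α f * coeff (m + 1 - α) g) := by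
    intro α _
    rw [zsmul_eq_mul]
    push_cast
    ring
  rw [Finset.sum_congr rfl hc, Finset.sum_sub_distrib, ← Finset.mul_sum, ← Finset.mul_sum,
    hB, hA]
  linear_combination -hkey
end

section
/- Let f(x) = ∑_{n≥1} f_n x^n be a formal power series with zero constant term, k ≥ 1 an integer, and write f(x)^k = ∑_{n≥k} g_n(k) x^n. Then g_k(k) = f_1^k, and for n ≥ k+1: (n−k) f_1 g_n(k) = ∑_{α=1}^{n−k} [(α+1)(k+1) − (n+1)] f_{α+1} g_{n−α}(k). -/
open PowerSeries Finset

theorem powerSeries_pow_coeff_rec_of_constantCoeff_zero {R : Type*} [CommRing R]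
    (f : PowerSeries R) (hf : PowerSeries.constantCoeff f = 0) (k : ℕ) (hk : 1 ≤ k) :
    PowerSeries.coeff k (f ^ k) = (PowerSeries.coeff 1 f) ^ k ∧
      ∀ n, k + 1 ≤ n →
        (n - k : ℕ) • (PowerSeries.coeff 1 f * PowerSeries.coeff n (f ^ k)) =
          ∑ α ∈ Finset.Icc 1 (n - k),
            (((α : ℤ) + 1) * ((k : ℤ) + 1) - ((n : ℤ) + 1)) •
              (PowerSeries.coeff (α + 1) f * PowerSeries.coeff (n - α) (f ^ k)) := by
  -- vanishing of low coefficients of f^k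
  have hvan : ∀ j, j < k → coeff j (f ^ k) = 0 := by
    intro j hj
    have : (X : R⟦X⟧) ^ k ∣ f ^ k := pow_dvd_pow_of_dvd (X_dvd_iff.2 hf) k
    exact (X_pow_dvd_iff.mp this) j hj
  constructor
  · obtain ⟨g, rfl⟩ := X_dvd_iff.2 hf
    rw [mul_pow]
    have h1 : coeff k ((X:R⟦X⟧) ^ k * g ^ k) = coeff 0 (g ^ k) := by
      have := coeff_X_pow_mul (g ^ k) k 0
      rwa [zero_add] at this
    rw [h1]
    simp [coeff_zero_eq_constantCoeff, ← map_pow]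
  -- the key recursion from the derivative identity
  have hD : f * (d⁄dX R (f ^ k)) = k • ((d⁄dX R f) * f ^ k) := by
    obtain ⟨j, rfl⟩ : ∃ j, k = j + 1 := ⟨k - 1, by omega⟩
    rw [Derivation.leibniz_pow]
    simp only [Nat.add_sub_cancel, smul_eq_mul]
    rw [mul_smul_comm]
    congr 1
    ring
  have key : ∀ m : ℕ, ∑ a ∈ range (m+1),
      (((m:ℤ)+1) - ((k:ℤ)+1)*a) • (coeff a f * coeff (m+1-a) (f^k)) = 0 := by
    intro m
    have hc := congrArg (coeff m) hD
    rw [coeff_mul, map_nsmul, coeff_mul] at hc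
    rw [Finset.Nat.sum_antidiagonal_eq_sum_range_succ_mk] at hc
    rw [Finset.Nat.sum_antidiagonal_eq_sum_range_succ_mk] at hc
    simp only [coeff_derivative] at hc
    -- hc : ∑ a ∈ range (m+1), f_a * (g_{m-a+1} * (m-a+1))
    --      = k • ∑ a ∈ range (m+1), (f_{a+1} * (a+1)) * g_{m-a}
    have split : ∀ a ∈ range (m+1),
        (((m:ℤ)+1) - ((k:ℤ)+1)*a) • (coeff a f * coeff (m+1-a) (f^k)) =
        coeff a f * (coeff (m - a + 1) (f ^ k) * ((m - a : ℕ) + 1))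
          - ((k:ℤ)*a) • (coeff a f * coeff (m+1-a) (f^k)) := by
      intro a ha
      rw [Finset.mem_range] at ha
      have h1 : m + 1 - a = m - a + 1 := by omega
      rw [h1, eq_sub_iff_add_eq, ← add_smul, zsmul_eq_mul]
      have h2 : (((m:ℤ)+1 - ((k:ℤ)+1)*a + (k:ℤ)*a : ℤ) : R) = ((m - a : ℕ) : R) + 1 := by
        push_cast [Nat.cast_sub (by omega : a ≤ m)]
        ring
      rw [h2]; ring
    rw [Finset.sum_congr rfl split, Finset.sum_sub_distrib, hc, sub_eq_zero, Finset.smul_sum]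
    rw [Finset.sum_range_succ' (fun a => ((k:ℤ)*a) • (coeff a f * coeff (m+1-a) (f^k)))]
    rw [Finset.sum_range_succ]
    have hg0 : coeff (m - m) (f ^ k) = 0 := by
      simpa using hvan 0 (by omega)
    rw [hg0]
    simp only [Nat.cast_zero, mul_zero, zero_smul, add_zero, mul_zero, smul_zero]
    refine Finset.sum_congr rfl fun b hb => ?_
    have h3 : m + 1 - (b + 1) = m - b := by omega
    rw [h3, zsmul_eq_mul, nsmul_eq_mul]
    push_cast
    ring
  -- derive the stated recursion
  intro n hn
  have hkey := key n
  rw [Finset.sum_range_succ' _ n] at hkey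
  -- now sum over range n of a = b+1 terms, plus a = 0 term
  simp only [Nat.cast_zero, mul_zero, sub_zero, Nat.sub_zero,
    coeff_zero_eq_constantCoeff_apply, hf, zero_mul, smul_zero, add_zero] at hkey
  obtain ⟨N, rfl⟩ : ∃ N, n = N + 1 := ⟨n - 1, by omega⟩
  rw [Finset.sum_range_succ' _ N] at hkey
  -- hkey : S + T0 = 0
  have hS := eq_neg_of_add_eq_zero_right hkey
  -- goal LHS equals the b = 0 term
  have hM : N + 1 - k ≤ N := by omega
  calc ((N + 1 - k : ℕ)) • (coeff 1 f * coeff (N+1) (f ^ k))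
      = (((N:ℤ) + 1 + 1 - ((k:ℤ) + 1) * (↑(0:ℕ) + 1))) •
          (coeff (0 + 1) f * coeff (N + 1 + 1 - (0 + 1)) (f ^ k)) := by
        rw [← natCast_zsmul]
        norm_num
        congr 1
        push_cast [Nat.cast_sub (by omega : k ≤ N + 1)]
        ring
    _ = - ∑ b ∈ range N, ((↑(N+1):ℤ) + 1 - ((k:ℤ) + 1) * (↑(b + 1) + 1)) •
          (coeff (b + 1 + 1) f * coeff (N + 1 + 1 - (b + 1 + 1)) (f ^ k)) := by
        exact_mod_cast hS
    _ = ∑ α ∈ Icc 1 (N + 1 - k), (((α:ℤ) + 1) * ((k:ℤ) + 1) - ((N:ℤ) + 1 + 1)) •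
          (coeff (α + 1) f * coeff (N + 1 - α) (f ^ k)) := by
        rw [← Finset.sum_neg_distrib]
        rw [show Icc 1 (N + 1 - k) = Ico 1 (N + 1 - k + 1) from rfl]
        rw [Finset.sum_Ico_eq_sum_range]
        rw [show N + 1 - k + 1 - 1 = N + 1 - k from by omega]
        rw [← Finset.sum_subset (Finset.range_subset_range.2 hM)]
        · refine Finset.sum_congr rfl fun c hc => ?_
          rw [Finset.mem_range] at hc
          rw [show 1 + c + 1 = c + 1 + 1 from by omega,
            show N + 1 - (1 + c) = N + 1 + 1 - (c + 1 + 1) from by omega]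
          rw [← neg_smul]
          congr 1
          push_cast
          ring
        · intro c hcr hcm
          rw [Finset.mem_range] at hcr hcm
          rw [show N + 1 + 1 - (c + 1 + 1) = N - c from by omega,
            hvan (N - c) (by omega)]
          simp
end

section
/- For n ≥ k+1 and k ≥ 1, the Stirling number of the second kind satisfies S(n, k+1) = (1/(k+1)!) ∑_{α_1=k}^{n−1} ∑_{α_2=k−1}^{α_1−1} ⋯ ∑_{α_k=1}^{α_{k−1}−1} C(n,α_1) C(α_1,α_2) ⋯ C(α_{k−1},α_k). -/
open Finset

/-- The Stirling number of the second kind, as a rational number: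
`S(n,k) = (1/k!) ∑_{α=0}^{k} (−1)^{k−α} C(k,α) α^n`. -/
noncomputable def stirling2 (n k : ℕ) : ℚ :=
  ((k.factorial : ℚ))⁻¹ *
    ∑ α ∈ Finset.range (k + 1), (-1) ^ (k - α) * (k.choose α : ℚ) * (α : ℚ) ^ n


noncomputable def Surj (n k : ℕ) : ℚ :=
  ∑ α ∈ Finset.range (k + 1), (-1) ^ (k - α) * (k.choose α : ℚ) * (α : ℚ) ^ n

lemma surj_succ (n k : ℕ) :
    Surj n (k+1) = ∑ m ∈ Finset.range n, (n.choose m : ℚ) * Surj m k := by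
  have key : ∀ α : ℕ, ∑ m ∈ Finset.range n, (n.choose m : ℚ) * (α:ℚ)^m
      = ((α:ℚ)+1)^n - (α:ℚ)^n := by
    intro α
    have h : ((α:ℚ)+1)^n = ∑ m ∈ Finset.range (n+1), (n.choose m : ℚ) * (α:ℚ)^m := by
      rw [add_pow]
      exact Finset.sum_congr rfl fun m _ => by ring
    rw [h, Finset.sum_range_succ, Nat.choose_self]
    push_cast
    ring
  have hR : ∑ m ∈ Finset.range n, (n.choose m : ℚ) * Surj m k
      = ∑ α ∈ Finset.range (k+1), (-1)^(k-α) * (k.choose α : ℚ) * (((α:ℚ)+1)^n - (α:ℚ)^n) := by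
    unfold Surj
    simp_rw [Finset.mul_sum]
    rw [Finset.sum_comm]
    refine Finset.sum_congr rfl fun α _ => ?_
    rw [← key α, Finset.mul_sum]
    exact Finset.sum_congr rfl fun m _ => by ring
  rw [hR]
  unfold Surj
  rw [Finset.sum_range_succ' (fun α => ((-1):ℚ)^(k+1-α) * (((k+1).choose α : ℕ) : ℚ) * (α:ℚ)^n)]
  have hsplit : ∀ α ∈ Finset.range (k+1),
      ((-1):ℚ)^(k+1-(α+1)) * (((k+1).choose (α+1) : ℕ):ℚ) * (((α+1:ℕ)):ℚ)^n
      = (-1:ℚ)^(k-α) * (k.choose α : ℚ) * (((α:ℚ)+1))^n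
        + (-1:ℚ)^(k-α) * (k.choose (α+1) : ℚ) * (((α:ℚ)+1))^n := by
    intro α hα
    have h1 : k + 1 - (α+1) = k - α := by omega
    rw [h1, Nat.choose_succ_succ]
    push_cast
    ring
  rw [Finset.sum_congr rfl hsplit, Finset.sum_add_distrib]
  have hD : ∑ α ∈ Finset.range (k+1), (-1:ℚ)^(k-α) * (k.choose (α+1) : ℚ) * ((α:ℚ)+1)^n
      = - (∑ α ∈ Finset.range (k+1), (-1:ℚ)^(k-α) * (k.choose α : ℚ) * (α:ℚ)^n)
        - (-1:ℚ)^(k+1) * ((0:ℚ))^n := by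
    have e1 : ∑ β ∈ Finset.range (k+2), (-1:ℚ)^(k+1-β) * (k.choose β : ℚ) * (β:ℚ)^n
        = ∑ α ∈ Finset.range (k+1), (-1:ℚ)^(k-α) * (k.choose (α+1) : ℚ) * ((α:ℚ)+1)^n
          + (-1:ℚ)^(k+1) * ((0:ℚ))^n := by
      rw [Finset.sum_range_succ' (fun β => (-1:ℚ)^(k+1-β) * (k.choose β : ℚ) * (β:ℚ)^n)]
      congr 1
      · refine Finset.sum_congr rfl fun α hα => ?_
        have h1 : k + 1 - (α+1) = k - α := by omega
        rw [h1]
        push_cast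
        ring
      · simp
    have e2 : ∑ β ∈ Finset.range (k+2), (-1:ℚ)^(k+1-β) * (k.choose β : ℚ) * (β:ℚ)^n
        = - ∑ α ∈ Finset.range (k+1), (-1:ℚ)^(k-α) * (k.choose α : ℚ) * (α:ℚ)^n := by
      rw [Finset.sum_range_succ, Nat.choose_succ_self]
      simp only [Nat.cast_zero, mul_zero, zero_mul, add_zero]
      rw [← Finset.sum_neg_distrib]
      refine Finset.sum_congr rfl fun β hβ => ?_
      rw [Finset.mem_range] at hβ
      have h1 : k + 1 - β = (k - β) + 1 := by omega
      rw [h1, pow_succ]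
      ring
    linarith [e1, e2]
  simp only [mul_sub]
  rw [Finset.sum_sub_distrib, hD]
  simp only [Nat.sub_zero, Nat.choose_zero_right, Nat.cast_one, Nat.cast_zero, mul_one]
  ring

noncomputable def T : ℕ → ℕ → ℚ
  | 0, _ => 1
  | (k+1), n => ∑ m ∈ Finset.Ico (k+1) n, (n.choose m : ℚ) * T k m

lemma surj_eq_zero : ∀ k, ∀ m, m < k → Surj m k = 0 := by
  intro k
  induction k with
  | zero => intro m h; omega
  | succ k ih =>
    intro m hm
    rw [surj_succ]
    refine Finset.sum_eq_zero fun j hj => ?_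
    rw [Finset.mem_range] at hj
    rw [ih j (by omega), mul_zero]

lemma surj_eq_T : ∀ k n, 1 ≤ n → Surj n (k+1) = T k n := by
  intro k
  induction k with
  | zero =>
    intro n hn
    show Surj n 1 = 1
    unfold Surj
    rw [Finset.sum_range_succ]
    simp [zero_pow (by omega : n ≠ 0)]
  | succ k ih =>
    intro n hn
    rw [surj_succ]
    have h1 : ∑ m ∈ Finset.range n, (n.choose m : ℚ) * Surj m (k+1)
        = ∑ m ∈ Finset.Ico (k+1) n, (n.choose m : ℚ) * Surj m (k+1) := by
      rw [Finset.range_eq_Ico]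
      symm
      apply Finset.sum_subset
      · exact Finset.Ico_subset_Ico (by omega) le_rfl
      · intro m hm hnot
        simp only [Finset.mem_Ico] at hm hnot
        rw [surj_eq_zero (k+1) m (by omega), mul_zero]
    rw [h1]
    show _ = T (k+1) n
    rw [show T (k+1) n = ∑ m ∈ Finset.Ico (k+1) n, (n.choose m : ℚ) * T k m from rfl]
    refine Finset.sum_congr rfl fun m hm => ?_
    rw [Finset.mem_Ico] at hm
    rw [ih m (by omega)]

def Fset (n k : ℕ) : Finset (Fin k → ℕ) :=
  (Fintype.piFinset fun _ : Fin k => Finset.range n).filter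
    (fun α => (∀ i : Fin k, k - (i : ℕ) ≤ α i) ∧
      ∀ i : Fin k, ∀ h : (i : ℕ) + 1 < k, α ⟨(i : ℕ) + 1, h⟩ < α i)

noncomputable def F (n k : ℕ) (α : Fin k → ℕ) : ℚ :=
  (fun a : ℕ → ℕ =>
      (n.choose (a 0) : ℚ) *
        ∏ i ∈ Finset.range (k - 1), ((a i).choose (a (i + 1)) : ℚ))
    (fun i => if h : i < k then α ⟨i, h⟩ else 0)

lemma mem_Fset {n k : ℕ} {α : Fin k → ℕ} : α ∈ Fset n k ↔
    (∀ i : Fin k, α i < n) ∧ (∀ i : Fin k, k - (i : ℕ) ≤ α i) ∧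
      (∀ i : Fin k, ∀ h : (i : ℕ) + 1 < k, α ⟨(i : ℕ) + 1, h⟩ < α i) := by
  simp [Fset, Fintype.mem_piFinset, Finset.mem_filter, Finset.mem_range, and_assoc]

lemma chain_lt {k : ℕ} {α : Fin k → ℕ}
    (h : ∀ i : Fin k, ∀ hh : (i : ℕ) + 1 < k, α ⟨(i : ℕ) + 1, hh⟩ < α i) :
    ∀ a b : ℕ, ∀ ha : a < k, ∀ hb : b < k, a < b → α ⟨b, hb⟩ < α ⟨a, ha⟩ := by
  intro a b
  induction b with
  | zero => intro ha hb hab; omega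
  | succ b ihb =>
    intro ha hb hab
    have hb' : b < k := by omega
    have step : α ⟨b+1, hb⟩ < α ⟨b, hb'⟩ := h ⟨b, hb'⟩ hb
    rcases Nat.lt_or_ge a b with h' | h'
    · exact lt_trans step (ihb ha hb' h')
    · have : a = b := by omega
      subst this
      exact step

lemma sum_F : ∀ k n : ℕ, ∑ α ∈ Fset n (k+1), F n (k+1) α = T (k+1) n := by
  intro k
  induction k with
  | zero =>
    intro n
    rw [show T 1 n = ∑ m ∈ Finset.Ico 1 n, (n.choose m : ℚ) * T 0 m from rfl]
    refine Finset.sum_bij' (fun α _ => α 0) (fun m _ => fun _ => m) ?_ ?_ ?_ ?_ ?_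
    · intro α hα
      rw [mem_Fset] at hα
      rw [Finset.mem_Ico]
      exact ⟨hα.2.1 0, hα.1 0⟩
    · intro m hm
      rw [Finset.mem_Ico] at hm
      rw [mem_Fset]
      obtain ⟨hm1, hm2⟩ := hm
      refine ⟨fun i => hm2, fun i => ?_, fun i h => by omega⟩
      show 1 - (i : ℕ) ≤ m
      omega
    · intro α hα
      funext i
      have : i = 0 := by omega
      rw [this]
    · intro m hm
      rfl
    · intro α hα
      show F n 1 α = (n.choose (α 0) : ℚ) * T 0 (α 0)
      rw [show T 0 (α 0) = 1 from rfl]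
      simp [F]
  | succ k ih =>
    intro n
    rw [show T (k+1+1) n = ∑ m ∈ Finset.Ico (k+2) n, (n.choose m : ℚ) * T (k+1) m from rfl]
    have h1 : ∀ m ∈ Finset.Ico (k+2) n, (n.choose m : ℚ) * T (k+1) m
        = ∑ β ∈ Fset m (k+1), (n.choose m : ℚ) * F m (k+1) β := by
      intro m hm
      rw [← ih m, Finset.mul_sum]
    rw [Finset.sum_congr rfl h1,
      Finset.sum_sigma' (Finset.Ico (k+2) n) (fun m => Fset m (k+1))
        (fun m β => (n.choose m : ℚ) * F m (k+1) β)]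
    refine Finset.sum_bij'
      (fun α _ => (⟨α 0, fun i => α i.succ⟩ : (_ : ℕ) × (Fin (k+1) → ℕ)))
      (fun p _ => Fin.cons p.1 p.2) ?_ ?_ ?_ ?_ ?_
    · intro α hα
      rw [mem_Fset] at hα
      obtain ⟨hlt, hge, hdec⟩ := hα
      rw [Finset.mem_sigma, Finset.mem_Ico, mem_Fset]
      refine ⟨⟨?_, hlt 0⟩, ?_, ?_, ?_⟩
      · have := hge 0
        exact Nat.succ_le_of_lt (by simpa using this)
      · intro i
        show α i.succ < α 0
        exact chain_lt hdec 0 ((i : ℕ)+1) (by omega) (by omega) (by omega)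
      · intro i
        show k + 1 - (i : ℕ) ≤ α i.succ
        have := hge i.succ
        simp only [Fin.val_succ] at this
        omega
      · intro i h
        show α (⟨(i : ℕ)+1, h⟩ : Fin (k+1)).succ < α i.succ
        exact hdec i.succ (Nat.succ_lt_succ h)
    · rintro ⟨m, β⟩ hp
      rw [Finset.mem_sigma, Finset.mem_Ico, mem_Fset] at hp
      obtain ⟨⟨hm1, hm2⟩, hβlt, hβge, hβdec⟩ := hp
      dsimp only at hm1 hm2 hβlt hβge hβdec
      rw [mem_Fset]
      dsimp only
      refine ⟨?_, ?_, ?_⟩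
      · intro i
        refine Fin.cases ?_ (fun j => ?_) i
        · simpa using hm2
        · rw [Fin.cons_succ]
          exact lt_trans (hβlt j) hm2
      · intro i
        refine Fin.cases ?_ (fun j => ?_) i
        · simp
          omega
        · rw [Fin.cons_succ]
          have := hβge j
          simp only [Fin.val_succ]
          omega
      · intro i
        refine Fin.cases ?_ (fun j => ?_) i
        · intro h
          rw [show (⟨((0 : Fin (k+2)) : ℕ)+1, h⟩ : Fin (k+2)) = Fin.succ 0 from rfl,
            Fin.cons_succ, Fin.cons_zero]
          exact hβlt 0
        · intro h
          have h' : (j : ℕ) + 1 + 1 < k + 2 := h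
          rw [show (⟨((j.succ : Fin (k+2)) : ℕ)+1, h⟩ : Fin (k+2))
              = Fin.succ ⟨(j : ℕ)+1, by omega⟩ from rfl,
            Fin.cons_succ, Fin.cons_succ]
          exact hβdec j (by omega)
    · intro α hα
      exact Fin.cons_self_tail α
    · rintro ⟨m, β⟩ hp
      dsimp only
      have h2 : (fun i : Fin (k+1) => (Fin.cons m β : Fin (k+2) → ℕ) i.succ) = β :=
        funext fun i => @Fin.cons_succ (k+1) (fun _ => ℕ) m β i
      rw [Fin.cons_zero, h2]
    · intro α hα
      show F n (k+1+1) α = (n.choose (α 0) : ℚ) * F (α 0) (k+1) (fun i => α i.succ)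
      simp only [F]
      have key : ∀ i : ℕ,
          (if h : i < k+1 then (fun j : Fin (k+1) => α j.succ) ⟨i,h⟩ else 0)
          = (if h : i+1 < k+1+1 then α ⟨i+1,h⟩ else 0) := by
        intro i
        by_cases h : i < k+1
        · rw [dif_pos h, dif_pos (by omega : i+1 < k+1+1)]
          rfl
        · rw [dif_neg h, dif_neg (by omega)]
      simp_rw [key]
      rw [show k+1+1-1 = k+1 from rfl, show k+1-1 = k from rfl]
      rw [Finset.prod_range_succ']
      rw [show (if h : 0 < k+1+1 then α ⟨0,h⟩ else 0) = α 0 from rfl]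
      ring

theorem stirling2_closed_form (n k : ℕ) (hk : 1 ≤ k) (hn : k + 1 ≤ n) :
    stirling2 n (k + 1) =
      (((k + 1).factorial : ℚ))⁻¹ *
        ∑ α ∈ (Fintype.piFinset fun _ : Fin k => Finset.range n).filter
            (fun α => (∀ i : Fin k, k - (i : ℕ) ≤ α i) ∧
              ∀ i : Fin k, ∀ h : (i : ℕ) + 1 < k, α ⟨(i : ℕ) + 1, h⟩ < α i),
          (fun a : ℕ → ℕ =>
              (n.choose (a 0) : ℚ) *
                ∏ i ∈ Finset.range (k - 1), ((a i).choose (a (i + 1)) : ℚ))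
            (fun i => if h : i < k then α ⟨i, h⟩ else 0) := by
  obtain ⟨j, rfl⟩ : ∃ j, k = j + 1 := ⟨k - 1, by omega⟩
  show stirling2 n (j+1+1) = (((j+1+1).factorial : ℚ))⁻¹ * ∑ α ∈ Fset n (j+1), F n (j+1) α
  rw [sum_F j n]
  rw [show stirling2 n (j+1+1) = (((j+1+1).factorial : ℚ))⁻¹ * Surj n (j+1+1) from rfl]
  rw [surj_eq_T (j+1) n (by omega)]
end
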